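/- There is a constant c > 0 such that for infinitely many n there exists a 2-threshold function f on E_n^2 having at least c·n² distinct minimal teaching sets with respect to the class T(2,n,2) of 2-threshold functions. -/

import Mathlib

open Finset in
/-- The embedding of the integer cube `{0,…,n-1}^d` into `ℝ^d`. -/
def toR {d n : ℕ} (x : Fin d → Fin n) : Fin d → ℝ := fun i => (x i : ℝ)

open Finset in
/-- `f` is a `k`-threshold function on `{0,…,n-1}^d`: its `1`-set is the solution
set of a system of `k` linear inequalities. -/
def IsKThreshold (d n k : ℕ) (f : (Fin d → Fin n) → Bool) : Prop :=
  ∃ (a : Fin k → ℝ) (b : Fin k → Fin d → ℝ),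
    ∀ x, f x = true ↔ ∀ i, ∑ j, b i j * (x j : ℝ) ≤ a i

/-- The class `T(d,n,k)` of `k`-threshold functions. -/
def TClass (d n k : ℕ) : Set ((Fin d → Fin n) → Bool) := {f | IsKThreshold d n k f}

/-- The convex hull of the `1`-set of `f` (that is, `P(f)`). -/
def hullOne (d n : ℕ) (f : (Fin d → Fin n) → Bool) : Set (Fin d → ℝ) :=
  convexHull ℝ (toR '' {x | f x = true})

/-- `f` belongs to `T(d,n,*)`: its `1`-set equals `Conv(M₁(f)) ∩ E_n^d`. -/
def LatticeConvex {d n : ℕ} (f : (Fin d → Fin n) → Bool) : Prop :=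
  ∀ x, f x = true ↔ toR x ∈ hullOne d n f

/-- The class `T(d,n,*)` of all `k`-threshold functions for all `k`. -/
def TStar (d n : ℕ) : Set ((Fin d → Fin n) → Bool) := {f | LatticeConvex f}

/-- `T` is a teaching set of `f` with respect to the class `C`. -/
def TeachingSet {α : Type*} (C : Set (α → Bool)) (f : α → Bool) (T : Set α) : Prop :=
  ∀ g ∈ C, (∀ x ∈ T, g x = f x) → g = f

/-- `x` is an essential point of `f` with respect to the class `D`. -/
def Essential {α : Type*} (D : Set (α → Bool)) (f : α → Bool) (x : α) : Prop :=
  ∃ g ∈ D, g x ≠ f x ∧ ∀ y, y ≠ x → g y = f y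

/-- The set of vertices of `P(f)` (as lattice points). -/
def VertSet (d n : ℕ) (f : (Fin d → Fin n) → Bool) : Set (Fin d → Fin n) :=
  {x | toR x ∈ Set.extremePoints ℝ (hullOne d n f)}

/-- The set `D(f) = {x ∈ M₀(f) : Conv(P(f) ∪ {x}) ∩ M₀(f) = {x}}`. -/
def DSet (d n : ℕ) (f : (Fin d → Fin n) → Bool) : Set (Fin d → Fin n) :=
  {x | f x = false ∧
    ∀ y, toR y ∈ convexHull ℝ (toR '' {z | f z = true} ∪ {toR x}) → f y = false → y = x}

namespace S19


structure HP where
  A : ℝ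
  B : ℝ
  C : ℝ

def HP.le (h : HP) (x y : ℤ) : Prop := h.A * x + h.B * y ≤ h.C

def Mem (H K : HP) (x y : ℤ) : Prop := H.le x y ∧ K.le x y

lemma pair1 (h : HP) {x y x' y' u v u' v' : ℤ}
    (h1 : ¬ h.le x y) (h2 : ¬ h.le x' y')
    (m1 : h.le u v) (m2 : h.le u' v')
    (ex : x + x' = u + u') (ey : y + y' = v + v') : False := by
  unfold HP.le at *
  push_neg at h1 h2
  have ex' : (x : ℝ) + (x' : ℝ) = (u : ℝ) + (u' : ℝ) := by exact_mod_cast congrArg (fun t : ℤ => (t : ℝ)) ex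
  have ey' : (y : ℝ) + (y' : ℝ) = (v : ℝ) + (v' : ℝ) := by exact_mod_cast congrArg (fun t : ℤ => (t : ℝ)) ey
  have key : (h.A * x + h.B * y) + (h.A * x' + h.B * y')
      = (h.A * u + h.B * v) + (h.A * u' + h.B * v') := by
    linear_combination h.A * ex' + h.B * ey'
  linarith

lemma fill1 (h : HP) {j xb yb x y u v : ℤ} (hj : 1 ≤ j)
    (h1 : h.le xb yb) (h2 : h.le x y)
    (ex : j * u = (j - 1) * xb + x) (ey : j * v = (j - 1) * yb + y) :
    h.le u v := by
  unfold HP.le at *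
  have hjR : (0 : ℝ) < (j : ℝ) := by exact_mod_cast hj
  have hj1 : (0 : ℝ) ≤ (j : ℝ) - 1 := by
    have : (1 : ℝ) ≤ (j : ℝ) := by exact_mod_cast hj
    linarith
  have ex' : (j : ℝ) * u = ((j : ℝ) - 1) * xb + x := by exact_mod_cast congrArg (fun t : ℤ => (t : ℝ)) ex
  have ey' : (j : ℝ) * v = ((j : ℝ) - 1) * yb + y := by exact_mod_cast congrArg (fun t : ℤ => (t : ℝ)) ey
  have key : (j : ℝ) * (h.A * u + h.B * v)
      = ((j:ℝ) - 1) * (h.A * xb + h.B * yb) + (h.A * x + h.B * y) := by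
    linear_combination h.A * ex' + h.B * ey'
  have hb : ((j:ℝ) - 1) * (h.A * xb + h.B * yb) ≤ ((j:ℝ) - 1) * h.C :=
    mul_le_mul_of_nonneg_left h1 hj1
  have : (j : ℝ) * (h.A * u + h.B * v) ≤ (j : ℝ) * h.C := by nlinarith
  exact le_of_mul_le_mul_left this hjR

lemma fill_mem (H K : HP) {j xb yb x y u v : ℤ} (hj : 1 ≤ j)
    (h1 : Mem H K xb yb) (h2 : Mem H K x y)
    (ex : j * u = (j - 1) * xb + x) (ey : j * v = (j - 1) * yb + y) :
    Mem H K u v :=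
  ⟨fill1 H hj h1.1 h2.1 ex ey, fill1 K hj h1.2 h2.2 ex ey⟩

lemma exd (H K : HP) {x y : ℤ} (h : ¬ Mem H K x y) : ¬ H.le x y ∨ ¬ K.le x y := by
  by_contra hc
  push_neg at hc
  exact h ⟨hc.1, hc.2⟩

/-! ### abstract chain lemmas -/

section Chains

variable {P Q : ℤ → ℤ → Prop} {r : ℤ}
variable (pairP : ∀ {x y x' y' u v u' v' : ℤ}, ¬P x y → ¬P x' y' → P u v → P u' v' →
    x + x' = u + u' → y + y' = v + v' → False)
variable (pairQ : ∀ {x y x' y' u v u' v' : ℤ}, ¬Q x y → ¬Q x' y' → Q u v → Q u' v' →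
    x + x' = u + u' → y + y' = v + v' → False)

include pairP pairQ

/-- B1 : if `a₁` is in but `b₁` violates `P`, contradiction. -/
lemma chainB1
    (hA : P r r ∧ Q r r) (hB : P r (r+1) ∧ Q r (r+1))
    (ha1 : P (r+1) (r-1) ∧ Q (r+1) (r-1))
    (eW1 : ¬P (r+1) (r-2) ∨ ¬Q (r+1) (r-2))
    (eC2 : ¬P (r-1) (r+2) ∨ ¬Q (r-1) (r+2))
    (hb1 : ¬ P (r+1) r) : False := by
  have hW1 : ¬ Q (r+1) (r-2) := by
    rcases eW1 with h | h
    · exact (pairP hb1 h ha1.1 ha1.1 (by ring) (by ring)).elim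
    · exact h
  have hC2 : ¬ P (r-1) (r+2) := by
    rcases eC2 with h | h
    · exact h
    · exact (pairQ hW1 h hA.2 hA.2 (by ring) (by ring)).elim
  exact pairP hb1 hC2 hB.1 hB.1 (by ring) (by ring)

/-- B2 : if `b₁` is in but `a₁` violates `P`, contradiction. -/
lemma chainB2
    (hA : P r r ∧ Q r r) (hB : P r (r+1) ∧ Q r (r+1))
    (hb1 : P (r+1) r ∧ Q (r+1) r)
    (eC0 : ¬P (r-1) r ∨ ¬Q (r-1) r)
    (eC1 : ¬P (r-1) (r+1) ∨ ¬Q (r-1) (r+1))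
    (eP0 : ¬P r (r-1) ∨ ¬Q r (r-1))
    (eP1 : ¬P r (r+2) ∨ ¬Q r (r+2))
    (eU2 : ¬P (r+2) r ∨ ¬Q (r+2) r)
    (eG2 : ¬P (r+2) (r+1) ∨ ¬Q (r+2) (r+1))
    (ha1 : ¬ P (r+1) (r-1)) : False := by
  have hC1 : ¬ Q (r-1) (r+1) := by
    rcases eC1 with h | h
    · exact (pairP ha1 h hA.1 hA.1 (by ring) (by ring)).elim
    · exact h
  have hU2 : ¬ P (r+2) r := by
    rcases eU2 with h | h
    · exact h
    · exact (pairQ hC1 h hB.2 hb1.2 (by ring) (by ring)).elim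
  have hC0 : ¬ Q (r-1) r := by
    rcases eC0 with h | h
    · exact (pairP hU2 h hA.1 hb1.1 (by ring) (by ring)).elim
    · exact h
  have hG2 : ¬ P (r+2) (r+1) := by
    rcases eG2 with h | h
    · exact h
    · exact (pairQ hC0 h hB.2 hb1.2 (by ring) (by ring)).elim
  have hP0 : ¬ Q r (r-1) := by
    rcases eP0 with h | h
    · exact (pairP hG2 h hb1.1 hb1.1 (by ring) (by ring)).elim
    · exact h
  have hP1 : ¬ P r (r+2) := by
    rcases eP1 with h | h
    · exact h
    · exact (pairQ hP0 h hA.2 hB.2 (by ring) (by ring)).elim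
  exact pairP ha1 hP1 hB.1 hb1.1 (by ring) (by ring)

/-- b-step : if `a₂, aₖ, bₖ` are in (k ≥ 1) but `b_{k+1}` violates `P`, contradiction. -/
lemma chainBstep {k : ℤ}
    (hA : P r r ∧ Q r r) (hB : P r (r+1) ∧ Q r (r+1))
    (ha2 : P (r+2) (r-2) ∧ Q (r+2) (r-2))
    (hak : P (r+k) (r-k) ∧ Q (r+k) (r-k))
    (hbk : P (r+k) (r-k+1) ∧ Q (r+k) (r-k+1))
    (eW1 : ¬P (r+1) (r-2) ∨ ¬Q (r+1) (r-2))
    (eC2 : ¬P (r-1) (r+2) ∨ ¬Q (r-1) (r+2))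
    (hvb : ¬ P (r+k+1) (r-k)) : False := by
  have hW1 : ¬ Q (r+1) (r-2) := by
    rcases eW1 with h | h
    · exact (pairP hvb h ha2.1 hak.1 (by ring) (by ring)).elim
    · exact h
  have hC2 : ¬ P (r-1) (r+2) := by
    rcases eC2 with h | h
    · exact h
    · exact (pairQ hW1 h hA.2 hA.2 (by ring) (by ring)).elim
  exact pairP hvb hC2 hbk.1 hB.1 (by ring) (by ring)

/-- a-step : if `b₁, b₂, aₖ, b_{k+1}` are in (k ≥ 1) but `a_{k+1}` violates `P`. -/
lemma chainAstep {k : ℤ}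
    (hA : P r r ∧ Q r r) (hB : P r (r+1) ∧ Q r (r+1))
    (hb1 : P (r+1) r ∧ Q (r+1) r)
    (hb2 : P (r+2) (r-1) ∧ Q (r+2) (r-1))
    (hak : P (r+k) (r-k) ∧ Q (r+k) (r-k))
    (hbk1 : P (r+k+1) (r-k) ∧ Q (r+k+1) (r-k))
    (eC1 : ¬P (r-1) (r+1) ∨ ¬Q (r-1) (r+1))
    (eU2 : ¬P (r+2) r ∨ ¬Q (r+2) r)
    (hva : ¬ P (r+k+1) (r-k-1)) : False := by
  have hC1 : ¬ Q (r-1) (r+1) := by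
    rcases eC1 with h | h
    · exact (pairP hva h hA.1 hak.1 (by ring) (by ring)).elim
    · exact h
  have hU2 : ¬ P (r+2) r := by
    rcases eU2 with h | h
    · exact h
    · exact (pairQ hC1 h hB.2 hb1.2 (by ring) (by ring)).elim
  exact pairP hva hU2 hb2.1 hbk1.1 (by ring) (by ring)

/-- α-case : `a₂` and `b₂` both violate `P`. -/
lemma chainAlpha
    (hA : P r r ∧ Q r r) (hB : P r (r+1) ∧ Q r (r+1))
    (ha1 : P (r+1) (r-1) ∧ Q (r+1) (r-1))
    (hb1 : P (r+1) r ∧ Q (r+1) r)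
    (eP0 : ¬P r (r-1) ∨ ¬Q r (r-1))
    (eP1 : ¬P r (r+2) ∨ ¬Q r (r+2))
    (hva : ¬ P (r+2) (r-2)) (hvb : ¬ P (r+2) (r-1)) : False := by
  have hP1 : ¬ Q r (r+2) := by
    rcases eP1 with h | h
    · exact (pairP hva h hb1.1 hb1.1 (by ring) (by ring)).elim
    · exact h
  have hP0 : ¬ Q r (r-1) := by
    rcases eP0 with h | h
    · exact (pairP hvb h ha1.1 ha1.1 (by ring) (by ring)).elim
    · exact h
  exact pairQ hP0 hP1 hA.2 hB.2 (by ring) (by ring)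

/-- β-case : `a₂` violates `P`, `b₂` violates `Q`. -/
lemma chainBeta
    (hA : P r r ∧ Q r r) (hB : P r (r+1) ∧ Q r (r+1))
    (hb1 : P (r+1) r ∧ Q (r+1) r)
    (eC2 : ¬P (r-1) (r+2) ∨ ¬Q (r-1) (r+2))
    (hva : ¬ P (r+2) (r-2)) (hvb : ¬ Q (r+2) (r-1)) : False := by
  rcases eC2 with h | h
  · exact pairP hva h hA.1 hb1.1 (by ring) (by ring)
  · exact pairQ hvb h hB.2 hb1.2 (by ring) (by ring)

end Chains

/-- The core geometric rigidity lemma. -/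
theorem core (H K : HP) (r : ℤ)
    (hA : Mem H K r r) (hB : Mem H K r (r+1))
    (eC0 : ¬ Mem H K (r-1) r) (eC1 : ¬ Mem H K (r-1) (r+1)) (eC2 : ¬ Mem H K (r-1) (r+2))
    (eP0 : ¬ Mem H K r (r-1)) (eP1 : ¬ Mem H K r (r+2))
    (eW1 : ¬ Mem H K (r+1) (r-2)) (eU2 : ¬ Mem H K (r+2) r) (eG2 : ¬ Mem H K (r+2) (r+1))
    (cap : ∃ x y : ℤ, Mem H K x y ∧ r + 1 ≤ x ∧ (x + y = 2*r ∨ x + y = 2*r + 1)) :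
    ∀ k : ℤ, 1 ≤ k → Mem H K (r+k) (r-k) ∧ Mem H K (r+k) (r-k+1) := by
  classical
  have cst : ∀ {x₁ y₁ x₂ y₂ : ℤ}, x₁ = x₂ → y₁ = y₂ → Mem H K x₂ y₂ → Mem H K x₁ y₁ := by
    rintro x₁ y₁ x₂ y₂ rfl rfl h; exact h
  have cstH : ∀ {x₁ y₁ x₂ y₂ : ℤ}, x₁ = x₂ → y₁ = y₂ → ¬ H.le x₂ y₂ → ¬ H.le x₁ y₁ := by
    rintro x₁ y₁ x₂ y₂ rfl rfl h; exact h
  have cstK : ∀ {x₁ y₁ x₂ y₂ : ℤ}, x₁ = x₂ → y₁ = y₂ → ¬ K.le x₂ y₂ → ¬ K.le x₁ y₁ := by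
    rintro x₁ y₁ x₂ y₂ rfl rfl h; exact h
  have pairH : ∀ {x y x' y' u v u' v' : ℤ}, ¬H.le x y → ¬H.le x' y' → H.le u v → H.le u' v' →
      x + x' = u + u' → y + y' = v + v' → False := fun h1 h2 m1 m2 ex ey => pair1 H h1 h2 m1 m2 ex ey
  have pairK : ∀ {x y x' y' u v u' v' : ℤ}, ¬K.le x y → ¬K.le x' y' → K.le u v → K.le u' v' →
      x + x' = u + u' → y + y' = v + v' → False := fun h1 h2 m1 m2 ex ey => pair1 K h1 h2 m1 m2 ex ey
  have dC0 := exd H K eC0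
  have dC1 := exd H K eC1
  have dC2 := exd H K eC2
  have dP0 := exd H K eP0
  have dP1 := exd H K eP1
  have dW1 := exd H K eW1
  have dU2 := exd H K eU2
  have dG2 := exd H K eG2
  have dC0' := dC0.symm
  have dC1' := dC1.symm
  have dC2' := dC2.symm
  have dP0' := dP0.symm
  have dP1' := dP1.symm
  have dW1' := dW1.symm
  have dU2' := dU2.symm
  have dG2' := dG2.symm
  have swap : ∀ {x y : ℤ}, Mem H K x y → (K.le x y ∧ H.le x y) := fun h => ⟨h.2, h.1⟩
  -- Step 1 : a₁ or b₁ is in the wedge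
  have step1 : Mem H K (r+1) (r-1) ∨ Mem H K (r+1) r := by
    obtain ⟨x, y, hm, hx, hsum⟩ := cap
    have hj : 1 ≤ x - r := by omega
    rcases hsum with hs | hs
    · left
      have hy : y = 2*r - x := by omega
      subst hy
      exact fill_mem H K hj hA hm (by ring) (by ring)
    · right
      have hy : y = 2*r + 1 - x := by omega
      subst hy
      exact fill_mem H K hj hB hm (by ring) (by ring)
  -- Step 2 : both a₁ and b₁ are in the wedge
  have ha1b1 : Mem H K (r+1) (r-1) ∧ Mem H K (r+1) r := by
    rcases step1 with h1 | h1
    · refine ⟨h1, ?_⟩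
      by_contra hb
      rcases exd H K hb with hv | hv
      · exact chainB1 pairH pairK hA hB h1 dW1 dC2 hv
      · exact chainB1 pairK pairH (swap hA) (swap hB) (swap h1) dW1' dC2' hv
    · refine ⟨?_, h1⟩
      by_contra hb
      rcases exd H K hb with hv | hv
      · exact chainB2 pairH pairK hA hB h1 dC0 dC1 dP0 dP1 dU2 dG2 hv
      · exact chainB2 pairK pairH (swap hA) (swap hB) (swap h1) dC0' dC1' dP0' dP1' dU2' dG2' hv
  obtain ⟨ma1, mb1⟩ := ha1b1
  -- normalized copies for k = 1 instantiations
  have ma1k : Mem H K (r + 1) (r - 1) := ma1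
  have mb1k : Mem H K (r + 1) (r - 1 + 1) := cst rfl (by ring) mb1
  -- Step 3 : a₂ and b₂
  have mb2 : Mem H K (r+2) (r-1) := by
    by_contra hb
    rcases exd H K hb with hv | hv
    · have hv' : ¬ H.le (r + 1 + 1) (r - 1) := cstH (by ring) rfl hv
      have hna2 : ¬ Mem H K (r+2) (r-2) := fun ha2 =>
        chainBstep (k := 1) pairH pairK hA hB ha2 ma1k mb1k dW1 dC2 hv'
      rcases exd H K hna2 with hva | hva
      · exact chainAlpha pairH pairK hA hB ma1 mb1 dP0 dP1 hva hv
      · exact chainBeta pairK pairH (swap hA) (swap hB) (swap mb1) dC2' hva hv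
    · have hv' : ¬ K.le (r + 1 + 1) (r - 1) := cstK (by ring) rfl hv
      have hna2 : ¬ Mem H K (r+2) (r-2) := fun ha2 =>
        chainBstep (k := 1) pairK pairH (swap hA) (swap hB) (swap ha2)
          (swap ma1k) (swap mb1k) dW1' dC2' hv'
      rcases exd H K hna2 with hva | hva
      · exact chainBeta pairH pairK hA hB mb1 dC2 hva hv
      · exact chainAlpha pairK pairH (swap hA) (swap hB) (swap ma1) (swap mb1) dP0' dP1' hva hv
  have ma2 : Mem H K (r+2) (r-2) := by
    have mb2k : Mem H K (r + 1 + 1) (r - 1) := cst (by ring) rfl mb2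
    by_contra hb
    rcases exd H K hb with hv | hv
    · have hv' : ¬ H.le (r + 1 + 1) (r - 1 - 1) := cstH (by ring) (by ring) hv
      exact chainAstep (k := 1) pairH pairK hA hB mb1 mb2 ma1k mb2k dC1 dU2 hv'
    · have hv' : ¬ K.le (r + 1 + 1) (r - 1 - 1) := cstK (by ring) (by ring) hv
      exact chainAstep (k := 1) pairK pairH (swap hA) (swap hB) (swap mb1) (swap mb2)
        (swap ma1k) (swap mb2k) dC1' dU2' hv'
  -- Step 4 : induction
  have main : ∀ m : ℕ, Mem H K (r + ((m:ℤ)+1)) (r - ((m:ℤ)+1)) ∧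
      Mem H K (r + ((m:ℤ)+1)) (r - ((m:ℤ)+1) + 1) := by
    intro m
    induction m with
    | zero =>
      constructor
      · exact cst (by push_cast; ring) (by push_cast; ring) ma1
      · exact cst (by push_cast; ring) (by push_cast; ring) mb1
    | succ p ih =>
      obtain ⟨mak, mbk⟩ := ih
      set k : ℤ := (p : ℤ) + 1 with hk
      have hak : Mem H K (r + k) (r - k) := mak
      have hbk : Mem H K (r + k) (r - k + 1) := mbk
      have hbk1 : Mem H K (r + k + 1) (r - k) := by
        by_contra hb
        rcases exd H K hb with hv | hv
        · exact chainBstep pairH pairK hA hB ma2 hak hbk dW1 dC2 hv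
        · exact chainBstep pairK pairH (swap hA) (swap hB) (swap ma2)
            (swap hak) (swap hbk) dW1' dC2' hv
      have hak1 : Mem H K (r + k + 1) (r - k - 1) := by
        by_contra hb
        rcases exd H K hb with hv | hv
        · exact chainAstep pairH pairK hA hB mb1 mb2 hak hbk1 dC1 dU2 hv
        · exact chainAstep pairK pairH (swap hA) (swap hB) (swap mb1) (swap mb2)
            (swap hak) (swap hbk1) dC1' dU2' hv
      constructor
      · exact cst (by push_cast [hk]; ring) (by push_cast [hk]; ring) hak1
      · exact cst (by push_cast [hk]; ring) (by push_cast [hk]; ring) hbk1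
  intro k hk
  obtain ⟨m, rfl⟩ : ∃ m : ℕ, k = (m : ℤ) + 1 := ⟨(k-1).toNat, by omega⟩
  exact main m



variable (r : ℕ)

abbrev Pt (r : ℕ) := Fin 2 → Fin (2*r+2)

/-- grid point from coordinates -/
def gp (x y : ℕ) (hx : x < 2*r+2) (hy : y < 2*r+2) : Pt r := ![⟨x, hx⟩, ⟨y, hy⟩]

@[simp] lemma gp0 (x y : ℕ) (hx : x < 2*r+2) (hy : y < 2*r+2) : ((gp r x y hx hy 0 : Fin (2*r+2)) : ℕ) = x := rfl
@[simp] lemma gp1 (x y : ℕ) (hx : x < 2*r+2) (hy : y < 2*r+2) : ((gp r x y hx hy 1 : Fin (2*r+2)) : ℕ) = y := rfl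

lemma pt_eq_iff (u v : Pt r) : u = v ↔ ((u 0 : ℕ) = (v 0 : ℕ) ∧ (u 1 : ℕ) = (v 1 : ℕ)) := by
  constructor
  · rintro rfl; exact ⟨rfl, rfl⟩
  · rintro ⟨h0, h1⟩
    funext i
    fin_cases i
    · exact Fin.ext h0
    · exact Fin.ext h1

lemma xlt (u : Pt r) : (u 0 : ℕ) < 2*r+2 := (u 0).isLt
lemma ylt (u : Pt r) : (u 1 : ℕ) < 2*r+2 := (u 1).isLt

def fD : Pt r → Bool := fun u => decide ((u 0 : ℕ) = r ∧ ((u 1 : ℕ) = r ∨ (u 1 : ℕ) = r+1))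
def g2D : Pt r → Bool := fun u =>
  decide (r ≤ (u 0 : ℕ) ∧ ((u 0:ℕ) + (u 1:ℕ) = 2*r ∨ (u 0:ℕ) + (u 1:ℕ) = 2*r+1))
def g1D : Pt r → Bool := fun u =>
  decide (r ≤ (u 0 : ℕ) ∧ ((u 1:ℕ) = (u 0:ℕ) ∨ (u 1:ℕ) = (u 0:ℕ)+1))

def S2 : Set (Pt r) := {u | r+1 ≤ (u 0:ℕ) ∧ ((u 0:ℕ) + (u 1:ℕ) = 2*r ∨ (u 0:ℕ) + (u 1:ℕ) = 2*r+1)}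
def S1 : Set (Pt r) := {u | r+1 ≤ (u 0:ℕ) ∧ ((u 1:ℕ) = (u 0:ℕ) ∨ (u 1:ℕ) = (u 0:ℕ)+1)}

lemma forall2_iff (a : Fin 2 → ℝ) (b : Fin 2 → Fin 2 → ℝ) (u : Pt r) :
    (∀ i, ∑ j, b i j * (u j : ℝ) ≤ a i) ↔
      (b 0 0 * ((u 0 : ℕ) : ℝ) + b 0 1 * ((u 1 : ℕ) : ℝ) ≤ a 0 ∧
       b 1 0 * ((u 0 : ℕ) : ℝ) + b 1 1 * ((u 1 : ℕ) : ℝ) ≤ a 1) := by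
  rw [Fin.forall_fin_two]
  simp [Fin.sum_univ_two]

lemma cast_bounds (u : Pt r) :
    ((u 0 : ℕ) : ℝ) ≤ 2*(r:ℝ)+1 ∧ ((u 1 : ℕ) : ℝ) ≤ 2*(r:ℝ)+1 ∧
    (0:ℝ) ≤ ((u 0 : ℕ) : ℝ) ∧ (0:ℝ) ≤ ((u 1 : ℕ) : ℝ) := by
  have h0 := xlt r u
  have h1 := ylt r u
  refine ⟨?_, ?_, by positivity, by positivity⟩
  · have : ((u 0 : ℕ) : ℝ) ≤ ((2*r+1 : ℕ) : ℝ) := by exact_mod_cast Nat.lt_succ_iff.mp (by omega)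
    push_cast at this; linarith
  · have : ((u 1 : ℕ) : ℝ) ≤ ((2*r+1 : ℕ) : ℝ) := by exact_mod_cast Nat.lt_succ_iff.mp (by omega)
    push_cast at this; linarith

lemma fD_isk : IsKThreshold 2 (2*r+2) 2 (fD r) := by
  classical
  set N : ℝ := 2*(r:ℝ)+2 with hN
  refine ⟨![N*(r:ℝ) - (r:ℝ), (r:ℝ)+1 - N*(r:ℝ)], ![![N, -1], ![-N, 1]], ?_⟩
  intro u
  rw [forall2_iff]
  simp only [Matrix.cons_val_zero, Matrix.cons_val_one, Matrix.head_cons]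
  set X := ((u 0 : ℕ) : ℝ) with hX
  set Y := ((u 1 : ℕ) : ℝ) with hY
  obtain ⟨bX, bY, nX, nY⟩ := cast_bounds r u
  rw [fD]
  simp only [decide_eq_true_eq]
  constructor
  · rintro ⟨h0, h1⟩
    have hXr : X = (r:ℝ) := by rw [hX, h0]
    rcases h1 with h1 | h1
    · have hYr : Y = (r:ℝ) := by rw [hY, h1]
      constructor <;> [skip; skip] <;> rw [hXr, hYr] <;> ring_nf <;> nlinarith [hN]
    · have hYr : Y = (r:ℝ)+1 := by rw [hY, h1]; push_cast; ring
      constructor <;> rw [hXr, hYr] <;> nlinarith [hN]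
  · rintro ⟨h0, h1⟩
    -- N*X - Y ≤ N*r - r  and  -N*X + Y ≤ r + 1 - N*r
    have hNpos : (0:ℝ) < N := by rw [hN]; positivity
    have hx1 : X < (r:ℝ) + 1 := by nlinarith
    have hx2 : (r:ℝ) - 1 < X := by nlinarith
    have hxr : (u 0 : ℕ) = r := by
      have a1 : ((u 0 : ℕ) : ℝ) < ((r+1 : ℕ) : ℝ) := by push_cast; linarith [hx1]
      have a2 : ((r:ℕ) : ℝ) - 1 < ((u 0 : ℕ) : ℝ) := by push_cast; linarith [hx2]
      have b1 : (u 0 : ℕ) < r + 1 := by exact_mod_cast a1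
      have b2 : r ≤ (u 0 : ℕ) := by
        by_contra hc
        push_neg at hc
        have : ((u 0 : ℕ) : ℝ) ≤ ((r:ℕ):ℝ) - 1 := by
          have : (u 0 : ℕ) + 1 ≤ r := hc
          have := (Nat.cast_le (α := ℝ)).mpr this
          push_cast at this ⊢
          linarith
        linarith
      omega
    have hXr : X = (r:ℝ) := by rw [hX, hxr]
    have hy1 : (r:ℝ) ≤ Y := by nlinarith
    have hy2 : Y ≤ (r:ℝ) + 1 := by nlinarith
    have hyr : (u 1 : ℕ) = r ∨ (u 1 : ℕ) = r + 1 := by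
      have a1 : ((r:ℕ):ℝ) ≤ ((u 1 : ℕ) : ℝ) := by push_cast; linarith
      have a2 : ((u 1 : ℕ) : ℝ) ≤ ((r+1:ℕ):ℝ) := by push_cast; linarith
      have b1 : r ≤ (u 1 : ℕ) := by exact_mod_cast a1
      have b2 : (u 1 : ℕ) ≤ r+1 := by exact_mod_cast a2
      omega
    exact ⟨hxr, hyr⟩

lemma g2D_isk : IsKThreshold 2 (2*r+2) 2 (g2D r) := by
  classical
  set N : ℝ := 2*(r:ℝ)+2 with hN
  refine ⟨![-(2*(r:ℝ)*N + (r:ℝ)), 2*(r:ℝ)*N + N - (r:ℝ)], ![![-(N+1), -N], ![N-1, N]], ?_⟩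
  intro u
  rw [forall2_iff]
  simp only [Matrix.cons_val_zero, Matrix.cons_val_one, Matrix.head_cons]
  set X := ((u 0 : ℕ) : ℝ) with hX
  set Y := ((u 1 : ℕ) : ℝ) with hY
  obtain ⟨bX, bY, nX, nY⟩ := cast_bounds r u
  rw [g2D]
  simp only [decide_eq_true_eq]
  have hNpos : (0:ℝ) < N := by rw [hN]; positivity
  constructor
  · rintro ⟨h0, h1⟩
    have hXr : (r:ℝ) ≤ X := by rw [hX]; exact_mod_cast h0
    rcases h1 with h1 | h1
    · have hS : X + Y = 2*(r:ℝ) := by rw [hX, hY]; exact_mod_cast h1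
      constructor <;> nlinarith
    · have hS : X + Y = 2*(r:ℝ)+1 := by rw [hX, hY]; exact_mod_cast h1
      constructor <;> nlinarith
  · rintro ⟨h0, h1⟩
    -- -(N+1)X - NY ≤ -(2rN + r)  and  (N-1)X + NY ≤ 2rN + N - r
    have hs1 : 2*(r:ℝ) - 1 < X + Y := by nlinarith
    have hs2 : X + Y < 2*(r:ℝ) + 2 := by nlinarith
    have hsum : (u 0 : ℕ) + (u 1 : ℕ) = 2*r ∨ (u 0 : ℕ) + (u 1 : ℕ) = 2*r+1 := by
      have a1 : ((2*r : ℕ) : ℝ) - 1 < (((u 0 : ℕ) + (u 1 : ℕ) : ℕ) : ℝ) := by push_cast; linarith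
      have a2 : (((u 0 : ℕ) + (u 1 : ℕ) : ℕ) : ℝ) < ((2*r+2 : ℕ) : ℝ) := by push_cast; linarith
      have b2 : (u 0 : ℕ) + (u 1 : ℕ) < 2*r+2 := by exact_mod_cast a2
      have b1 : 2*r ≤ (u 0 : ℕ) + (u 1 : ℕ) := by
        by_contra hc
        push_neg at hc
        have : (((u 0 : ℕ) + (u 1 : ℕ) : ℕ) : ℝ) ≤ ((2*r : ℕ) : ℝ) - 1 := by
          have h' : (u 0 : ℕ) + (u 1 : ℕ) + 1 ≤ 2*r := hc
          have := (Nat.cast_le (α := ℝ)).mpr h'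
          push_cast at this ⊢
          linarith
        linarith
      omega
    have hxr : r ≤ (u 0 : ℕ) := by
      have : (r:ℝ) ≤ X := by
        rcases hsum with h | h
        · have hS : X + Y = 2*(r:ℝ) := by rw [hX, hY]; exact_mod_cast h
          nlinarith
        · have hS : X + Y = 2*(r:ℝ)+1 := by rw [hX, hY]; exact_mod_cast h
          nlinarith
      rw [hX] at this
      exact_mod_cast this
    exact ⟨hxr, hsum⟩

lemma g1D_isk : IsKThreshold 2 (2*r+2) 2 (g1D r) := by
  classical
  set N : ℝ := 2*(r:ℝ)+2 with hN
  refine ⟨![-(r:ℝ), N - (r:ℝ)], ![![N-1, -N], ![-(N+1), N]], ?_⟩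
  intro u
  rw [forall2_iff]
  simp only [Matrix.cons_val_zero, Matrix.cons_val_one, Matrix.head_cons]
  set X := ((u 0 : ℕ) : ℝ) with hX
  set Y := ((u 1 : ℕ) : ℝ) with hY
  obtain ⟨bX, bY, nX, nY⟩ := cast_bounds r u
  rw [g1D]
  simp only [decide_eq_true_eq]
  have hNpos : (0:ℝ) < N := by rw [hN]; positivity
  constructor
  · rintro ⟨h0, h1⟩
    have hXr : (r:ℝ) ≤ X := by rw [hX]; exact_mod_cast h0
    rcases h1 with h1 | h1
    · have hS : Y = X := by rw [hX, hY, h1]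
      constructor <;> nlinarith
    · have hS : Y = X + 1 := by rw [hX, hY, h1]; push_cast; ring
      constructor <;> nlinarith
  · rintro ⟨h0, h1⟩
    -- (N-1)X - NY ≤ -r  and  -(N+1)X + NY ≤ N - r
    have hd1 : X - Y < 1 := by nlinarith
    have hd2 : Y - X < 2 := by nlinarith
    have hyx : (u 1 : ℕ) = (u 0 : ℕ) ∨ (u 1 : ℕ) = (u 0 : ℕ) + 1 := by
      have a1 : ((u 0 : ℕ) : ℝ) < ((u 1 : ℕ) : ℝ) + 1 := by linarith
      have a2 : ((u 1 : ℕ) : ℝ) < ((u 0 : ℕ) : ℝ) + 2 := by linarith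
      have b1 : (u 0 : ℕ) < (u 1 : ℕ) + 1 := by exact_mod_cast a1
      have b2 : (u 1 : ℕ) < (u 0 : ℕ) + 2 := by exact_mod_cast a2
      omega
    have hxr : r ≤ (u 0 : ℕ) := by
      have : (r:ℝ) ≤ X := by
        rcases hyx with h | h
        · have hS : Y = X := by rw [hX, hY, h]
          nlinarith
        · have hS : Y = X + 1 := by rw [hX, hY, h]; push_cast; ring
          nlinarith
      rw [hX] at this
      exact_mod_cast this
    exact ⟨hxr, hyx⟩

def Tset (p q : Pt r) : Set (Pt r) := {u | u ∉ S1 r ∧ u ∉ S2 r} ∪ {p, q}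

lemma mem_S1_iff (u : Pt r) : u ∈ S1 r ↔ (r+1 ≤ (u 0:ℕ) ∧ ((u 1:ℕ) = (u 0:ℕ) ∨ (u 1:ℕ) = (u 0:ℕ)+1)) := Iff.rfl
lemma mem_S2_iff (u : Pt r) : u ∈ S2 r ↔ (r+1 ≤ (u 0:ℕ) ∧ ((u 0:ℕ) + (u 1:ℕ) = 2*r ∨ (u 0:ℕ) + (u 1:ℕ) = 2*r+1)) := Iff.rfl

lemma fD_false {u : Pt r} (h : ¬ ((u 0:ℕ) = r ∧ ((u 1:ℕ) = r ∨ (u 1:ℕ) = r+1))) : fD r u = false := by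
  simp [fD, h]

lemma fD_true {u : Pt r} (h : (u 0:ℕ) = r ∧ ((u 1:ℕ) = r ∨ (u 1:ℕ) = r+1)) : fD r u = true := by
  simp [fD, h]

lemma teach (hr : 5 ≤ r) (p q : Pt r) (hp : p ∈ S2 r) (hq : q ∈ S1 r) :
    TeachingSet (TClass 2 (2*r+2) 2) (fD r) (Tset r p q) := by
  intro g hg hagree
  obtain ⟨a, b, hgiff⟩ := hg
  set H : HP := ⟨b 0 0, b 0 1, a 0⟩ with hH
  set K : HP := ⟨b 1 0, b 1 1, a 1⟩ with hK
  have memiff : ∀ u : Pt r, g u = true ↔ Mem H K ((u 0:ℕ):ℤ) ((u 1:ℕ):ℤ) := by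
    intro u
    rw [hgiff u, forall2_iff]
    unfold Mem HP.le
    rw [hH, hK]
    push_cast
    tauto
  have hagF : ∀ u : Pt r, u ∉ S1 r → u ∉ S2 r → g u = fD r u :=
    fun u h1 h2 => hagree u (Or.inl ⟨h1, h2⟩)
  -- "not in the wedge" from coordinates, for non-special points
  have notmem : ∀ (x y : ℕ), x < 2*r+2 → y < 2*r+2 →
      (¬ (x = r ∧ (y = r ∨ y = r+1))) →
      (¬ (r+1 ≤ x ∧ (x + y = 2*r ∨ x + y = 2*r+1))) →
      (¬ (r+1 ≤ x ∧ (y = x ∨ y = x+1))) →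
      ¬ Mem H K (x:ℤ) (y:ℤ) := by
    intro x y hx hy hf h2 h1 hm
    have hg' := hagF (gp r x y hx hy) (by rw [mem_S1_iff]; simpa using h1)
      (by rw [mem_S2_iff]; simpa using h2)
    have hgf : fD r (gp r x y hx hy) = false := fD_false r (by simpa using hf)
    rw [hgf] at hg'
    have : g (gp r x y hx hy) = true := by
      rw [memiff]
      simpa using hm
    rw [this] at hg'
    exact Bool.noConfusion hg'
  have inmem : ∀ (x y : ℕ), x < 2*r+2 → y < 2*r+2 →
      (x = r ∧ (y = r ∨ y = r+1)) → Mem H K (x:ℤ) (y:ℤ) := by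
    intro x y hx hy hf
    have h1 : (gp r x y hx hy) ∉ S1 r := by rw [mem_S1_iff]; simp; omega
    have h2 : (gp r x y hx hy) ∉ S2 r := by rw [mem_S2_iff]; simp; omega
    have hg' := hagF _ h1 h2
    rw [fD_true r (by simpa using hf)] at hg'
    have := (memiff (gp r x y hx hy)).mp hg'
    simpa using this
  -- membership of the domino
  have hA : Mem H K (r:ℤ) (r:ℤ) := by
    have := inmem r r (by omega) (by omega) ⟨rfl, Or.inl rfl⟩
    exact this
  have hB : Mem H K (r:ℤ) ((r:ℤ)+1) := by
    have := inmem r (r+1) (by omega) (by omega) ⟨rfl, Or.inr rfl⟩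
    rw [show (((r+1:ℕ)):ℤ) = (r:ℤ)+1 by push_cast; ring] at this
    exact this
  -- the ten excluded points
  have eCm : ¬ Mem H K ((r:ℤ)-1) ((r:ℤ)-1) := by
    have := notmem (r-1) (r-1) (by omega) (by omega) (by omega) (by omega) (by omega)
    rwa [show (((r-1:ℕ)):ℤ) = (r:ℤ)-1 by omega] at this
  have eC0 : ¬ Mem H K ((r:ℤ)-1) (r:ℤ) := by
    have := notmem (r-1) r (by omega) (by omega) (by omega) (by omega) (by omega)
    rwa [show (((r-1:ℕ)):ℤ) = (r:ℤ)-1 by omega] at this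
  have eC1 : ¬ Mem H K ((r:ℤ)-1) ((r:ℤ)+1) := by
    have := notmem (r-1) (r+1) (by omega) (by omega) (by omega) (by omega) (by omega)
    rwa [show (((r-1:ℕ)):ℤ) = (r:ℤ)-1 by omega,
         show (((r+1:ℕ)):ℤ) = (r:ℤ)+1 by omega] at this
  have eC2 : ¬ Mem H K ((r:ℤ)-1) ((r:ℤ)+2) := by
    have := notmem (r-1) (r+2) (by omega) (by omega) (by omega) (by omega) (by omega)
    rwa [show (((r-1:ℕ)):ℤ) = (r:ℤ)-1 by omega,
         show (((r+2:ℕ)):ℤ) = (r:ℤ)+2 by omega] at this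
  have eP0 : ¬ Mem H K (r:ℤ) ((r:ℤ)-1) := by
    have := notmem r (r-1) (by omega) (by omega) (by omega) (by omega) (by omega)
    rwa [show (((r-1:ℕ)):ℤ) = (r:ℤ)-1 by omega] at this
  have eP1 : ¬ Mem H K (r:ℤ) ((r:ℤ)+2) := by
    have := notmem r (r+2) (by omega) (by omega) (by omega) (by omega) (by omega)
    rwa [show (((r+2:ℕ)):ℤ) = (r:ℤ)+2 by omega] at this
  have eW1 : ¬ Mem H K ((r:ℤ)+1) ((r:ℤ)-2) := by
    have := notmem (r+1) (r-2) (by omega) (by omega) (by omega) (by omega) (by omega)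
    rwa [show (((r+1:ℕ)):ℤ) = (r:ℤ)+1 by omega,
         show (((r-2:ℕ)):ℤ) = (r:ℤ)-2 by omega] at this
  have eV1 : ¬ Mem H K ((r:ℤ)+1) ((r:ℤ)+3) := by
    have := notmem (r+1) (r+3) (by omega) (by omega) (by omega) (by omega) (by omega)
    rwa [show (((r+1:ℕ)):ℤ) = (r:ℤ)+1 by omega,
         show (((r+3:ℕ)):ℤ) = (r:ℤ)+3 by omega] at this
  have eU2 : ¬ Mem H K ((r:ℤ)+2) (r:ℤ) := by
    have := notmem (r+2) r (by omega) (by omega) (by omega) (by omega) (by omega)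
    rwa [show (((r+2:ℕ)):ℤ) = (r:ℤ)+2 by omega] at this
  have eG2 : ¬ Mem H K ((r:ℤ)+2) ((r:ℤ)+1) := by
    have := notmem (r+2) (r+1) (by omega) (by omega) (by omega) (by omega) (by omega)
    rwa [show (((r+2:ℕ)):ℤ) = (r:ℤ)+2 by omega,
         show (((r+1:ℕ)):ℤ) = (r:ℤ)+1 by omega] at this
  -- agreement at p and q (they are in Tset)
  have hgp : g p = false := by
    have := hagree p (Or.inr (Or.inl rfl))
    rw [fD_false r (by rw [mem_S2_iff] at hp; omega)] at this
    exact this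
  have hgq : g q = false := by
    have := hagree q (Or.inr (Or.inr rfl))
    rw [fD_false r (by rw [mem_S1_iff] at hq; omega)] at this
    exact this
  -- main conclusion
  funext u
  by_cases hu2 : u ∈ S2 r
  · -- S2 case
    have hfu : fD r u = false := fD_false r (by rw [mem_S2_iff] at hu2; omega)
    rw [hfu]
    by_contra hne
    have hgu : g u = true := by
      cases hgub : g u
      · exact absurd hgub hne
      · rfl
    have memu := (memiff u).mp hgu
    rw [mem_S2_iff] at hu2
    have cap : ∃ x y : ℤ, Mem H K x y ∧ (r:ℤ) + 1 ≤ x ∧ (x + y = 2*(r:ℤ) ∨ x + y = 2*(r:ℤ) + 1) := by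
      refine ⟨((u 0:ℕ):ℤ), ((u 1:ℕ):ℤ), memu, by exact_mod_cast hu2.1, ?_⟩
      rcases hu2.2 with h | h
      · left; omega
      · right; omega
    have concl := core H K (r:ℤ) hA hB eC0 eC1 eC2 eP0 eP1 eW1 eU2 eG2 cap
    -- apply at p
    rw [mem_S2_iff] at hp
    set xp := (p 0 : ℕ)
    set yp := (p 1 : ℕ)
    have hk : 1 ≤ (xp:ℤ) - r := by omega
    have hmemp : Mem H K (xp:ℤ) (yp:ℤ) := by
      rcases hp.2 with h | h
      · have := (concl ((xp:ℤ) - r) hk).1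
        rwa [show (r:ℤ) + ((xp:ℤ) - r) = (xp:ℤ) by ring,
             show (r:ℤ) - ((xp:ℤ) - r) = (yp:ℤ) by omega] at this
      · have := (concl ((xp:ℤ) - r) hk).2
        rwa [show (r:ℤ) + ((xp:ℤ) - r) = (xp:ℤ) by ring,
             show (r:ℤ) - ((xp:ℤ) - r) + 1 = (yp:ℤ) by omega] at this
    have : g p = true := (memiff p).mpr hmemp
    rw [this] at hgp
    exact Bool.noConfusion hgp
  · by_cases hu1 : u ∈ S1 r
    · -- S1 case : mirrored
      have hfu : fD r u = false := fD_false r (by rw [mem_S1_iff] at hu1; omega)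
      rw [hfu]
      by_contra hne
      have hgu : g u = true := by
        cases hgub : g u
        · exact absurd hgub hne
        · rfl
      have memu := (memiff u).mp hgu
      -- mirrored halfplanes
      set H' : HP := ⟨b 0 0, -(b 0 1), a 0 - b 0 1 * (2*(r:ℝ)+1)⟩ with hH'
      set K' : HP := ⟨b 1 0, -(b 1 1), a 1 - b 1 1 * (2*(r:ℝ)+1)⟩ with hK'
      have mirr : ∀ X Y : ℤ, Mem H' K' X Y ↔ Mem H K X (2*(r:ℤ)+1-Y) := by
        intro X Y
        unfold Mem HP.le
        rw [hH', hK', hH, hK]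
        simp only
        constructor
        · rintro ⟨h1, h2⟩
          constructor <;> push_cast at * <;> linarith
        · rintro ⟨h1, h2⟩
          constructor <;> push_cast at * <;> linarith
      have mA' : Mem H' K' (r:ℤ) (r:ℤ) := by
        rw [mirr, show 2*(r:ℤ)+1-(r:ℤ) = (r:ℤ)+1 by ring]; exact hB
      have mB' : Mem H' K' (r:ℤ) ((r:ℤ)+1) := by
        rw [mirr, show 2*(r:ℤ)+1-((r:ℤ)+1) = (r:ℤ) by ring]; exact hA
      have eC0' : ¬ Mem H' K' ((r:ℤ)-1) (r:ℤ) := by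
        rw [mirr, show 2*(r:ℤ)+1-(r:ℤ) = (r:ℤ)+1 by ring]; exact eC1
      have eC1' : ¬ Mem H' K' ((r:ℤ)-1) ((r:ℤ)+1) := by
        rw [mirr, show 2*(r:ℤ)+1-((r:ℤ)+1) = (r:ℤ) by ring]; exact eC0
      have eC2' : ¬ Mem H' K' ((r:ℤ)-1) ((r:ℤ)+2) := by
        rw [mirr, show 2*(r:ℤ)+1-((r:ℤ)+2) = (r:ℤ)-1 by ring]; exact eCm
      have eP0' : ¬ Mem H' K' (r:ℤ) ((r:ℤ)-1) := by
        rw [mirr, show 2*(r:ℤ)+1-((r:ℤ)-1) = (r:ℤ)+2 by ring]; exact eP1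
      have eP1' : ¬ Mem H' K' (r:ℤ) ((r:ℤ)+2) := by
        rw [mirr, show 2*(r:ℤ)+1-((r:ℤ)+2) = (r:ℤ)-1 by ring]; exact eP0
      have eW1' : ¬ Mem H' K' ((r:ℤ)+1) ((r:ℤ)-2) := by
        rw [mirr, show 2*(r:ℤ)+1-((r:ℤ)-2) = (r:ℤ)+3 by ring]; exact eV1
      have eU2' : ¬ Mem H' K' ((r:ℤ)+2) (r:ℤ) := by
        rw [mirr, show 2*(r:ℤ)+1-(r:ℤ) = (r:ℤ)+1 by ring]; exact eG2
      have eG2' : ¬ Mem H' K' ((r:ℤ)+2) ((r:ℤ)+1) := by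
        rw [mirr, show 2*(r:ℤ)+1-((r:ℤ)+1) = (r:ℤ) by ring]; exact eU2
      rw [mem_S1_iff] at hu1
      have cap' : ∃ x y : ℤ, Mem H' K' x y ∧ (r:ℤ) + 1 ≤ x ∧ (x + y = 2*(r:ℤ) ∨ x + y = 2*(r:ℤ) + 1) := by
        refine ⟨((u 0:ℕ):ℤ), 2*(r:ℤ)+1-((u 1:ℕ):ℤ), ?_, by exact_mod_cast hu1.1, ?_⟩
        · rw [mirr, show 2*(r:ℤ)+1-(2*(r:ℤ)+1-((u 1:ℕ):ℤ)) = ((u 1:ℕ):ℤ) by ring]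
          exact memu
        · have hyb : (u 1:ℕ) < 2*r+2 := ylt r u
          rcases hu1.2 with h | h
          · right; omega
          · left; omega
      have concl := core H' K' (r:ℤ) mA' mB' eC0' eC1' eC2' eP0' eP1' eW1' eU2' eG2' cap'
      rw [mem_S1_iff] at hq
      set xq := (q 0 : ℕ)
      set yq := (q 1 : ℕ)
      have hk : 1 ≤ (xq:ℤ) - r := by omega
      have hmemq : Mem H K (xq:ℤ) (yq:ℤ) := by
        rcases hq.2 with h | h
        · -- yq = xq : use b-part
          have := (concl ((xq:ℤ) - r) hk).2
          rw [mirr] at this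
          rwa [show (r:ℤ) + ((xq:ℤ) - r) = (xq:ℤ) by ring,
               show 2*(r:ℤ)+1 - ((r:ℤ) - ((xq:ℤ) - r) + 1) = (yq:ℤ) by omega] at this
        · -- yq = xq + 1 : use a-part
          have := (concl ((xq:ℤ) - r) hk).1
          rw [mirr] at this
          rwa [show (r:ℤ) + ((xq:ℤ) - r) = (xq:ℤ) by ring,
               show 2*(r:ℤ)+1 - ((r:ℤ) - ((xq:ℤ) - r)) = (yq:ℤ) by omega] at this
      have : g q = true := (memiff q).mpr hmemq
      rw [this] at hgq
      exact Bool.noConfusion hgq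
    · exact hagF u hu1 hu2

/-! ### non-teaching witnesses -/

lemma S1_S2_disj (v : Pt r) (h1 : v ∈ S1 r) (h2 : v ∈ S2 r) : False := by
  rw [mem_S1_iff] at h1
  rw [mem_S2_iff] at h2
  have := xlt r v
  have := ylt r v
  omega

lemma g2_eq_f_off (v : Pt r) (hv : v ∉ S2 r) : g2D r v = fD r v := by
  rw [mem_S2_iff] at hv
  rw [g2D, fD, decide_eq_decide]
  omega

lemma g1_eq_f_off (v : Pt r) (hv : v ∉ S1 r) : g1D r v = fD r v := by
  rw [mem_S1_iff] at hv
  rw [g1D, fD, decide_eq_decide]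
  omega

lemma g2_ne_f (hr : 5 ≤ r) : g2D r ≠ fD r := by
  intro h
  have hw := congrFun h (gp r (r+1) (r-1) (by omega) (by omega))
  have h1 : g2D r (gp r (r+1) (r-1) (by omega) (by omega)) = true := by
    rw [g2D, decide_eq_true_eq, gp0, gp1]
    omega
  have h2 : fD r (gp r (r+1) (r-1) (by omega) (by omega)) = false := by
    apply fD_false
    simp only [gp0, gp1]
    omega
  rw [h1, h2] at hw
  exact Bool.noConfusion hw

lemma g1_ne_f (hr : 5 ≤ r) : g1D r ≠ fD r := by
  intro h
  have hw := congrFun h (gp r (r+1) (r+1) (by omega) (by omega))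
  have h1 : g1D r (gp r (r+1) (r+1) (by omega) (by omega)) = true := by
    rw [g1D, decide_eq_true_eq, gp0, gp1]
    omega
  have h2 : fD r (gp r (r+1) (r+1) (by omega) (by omega)) = false := by
    apply fD_false
    simp only [gp0, gp1]
    omega
  rw [h1, h2] at hw
  exact Bool.noConfusion hw

lemma not_teach_dp (hr : 5 ≤ r) (p q : Pt r) (hp : p ∈ S2 r) (hq : q ∈ S1 r)
    (T : Set (Pt r)) (hT : T ⊆ Tset r p q) (hpT : p ∉ T) :
    ¬ TeachingSet (TClass 2 (2*r+2) 2) (fD r) T := by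
  intro h
  have hag : ∀ v ∈ T, g2D r v = fD r v := by
    intro v hv
    have hv' := hT hv
    rcases hv' with hv' | hv'
    · exact g2_eq_f_off r v hv'.2
    · rcases hv' with hv' | hv'
      · exact absurd (hv' ▸ hv) hpT
      · subst hv'
        exact g2_eq_f_off r v (fun h2 => S1_S2_disj r v hq h2)
  exact g2_ne_f r hr (h (g2D r) (g2D_isk r) hag)

lemma not_teach_dq (hr : 5 ≤ r) (p q : Pt r) (hp : p ∈ S2 r) (hq : q ∈ S1 r)
    (T : Set (Pt r)) (hT : T ⊆ Tset r p q) (hqT : q ∉ T) :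
    ¬ TeachingSet (TClass 2 (2*r+2) 2) (fD r) T := by
  intro h
  have hag : ∀ v ∈ T, g1D r v = fD r v := by
    intro v hv
    have hv' := hT hv
    rcases hv' with hv' | hv'
    · exact g1_eq_f_off r v hv'.1
    · rcases hv' with hv' | hv'
      · subst hv'
        exact g1_eq_f_off r v (fun h1 => S1_S2_disj r v h1 hp)
      · exact absurd (hv' ▸ hv) hqT
  exact g1_ne_f r hr (h (g1D r) (g1D_isk r) hag)

/-! ### minimal teaching subsets -/

lemma teaching_mono {α : Type*} (C : Set (α → Bool)) (f : α → Bool) {T T' : Set α}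
    (h : T ⊆ T') (hT : TeachingSet C f T) : TeachingSet C f T' :=
  fun g hg hag => hT g hg (fun x hx => hag x (h hx))

lemma exists_minimal {α : Type*} [Finite α] (C : Set (α → Bool)) (f : α → Bool) :
    ∀ (m : ℕ) (T : Set α), T.ncard ≤ m → TeachingSet C f T →
      ∃ T', T' ⊆ T ∧ TeachingSet C f T' ∧ ∀ T'' ⊂ T', ¬ TeachingSet C f T'' := by
  intro m
  induction m with
  | zero =>
    intro T hT0 hT
    have hfin : T.Finite := Set.toFinite T
    have hemp : T = ∅ := (Set.ncard_eq_zero hfin).mp (Nat.le_zero.mp hT0)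
    refine ⟨T, subset_rfl, hT, ?_⟩
    intro T'' hss
    rw [hemp] at hss
    exact absurd (Set.subset_empty_iff.mp hss.subset) hss.ne
  | succ p ih =>
    intro T hTm hT
    by_cases h : ∃ T'' , T'' ⊂ T ∧ TeachingSet C f T''
    · obtain ⟨T'', hss, hT''⟩ := h
      have hlt : T''.ncard < T.ncard := Set.ncard_lt_ncard hss (Set.toFinite T)
      obtain ⟨T', h1, h2, h3⟩ := ih T'' (by omega) hT''
      exact ⟨T', h1.trans hss.subset, h2, h3⟩
    · push_neg at h
      exact ⟨T, subset_rfl, hT, fun T'' hss hteach => h T'' hss hteach⟩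

/-! ### enumerations of S₁ and S₂ -/

def pmap (i : Fin (2*r+1)) : Pt r :=
  if h : (i:ℕ) < r then gp r (r+(i:ℕ)+1) (r-((i:ℕ)+1)) (by omega) (by omega)
  else gp r ((i:ℕ)+1) (2*r-(i:ℕ)) (by have := i.isLt; omega) (by omega)

def qmap (i : Fin (2*r+1)) : Pt r :=
  if h : (i:ℕ) < r then gp r (r+(i:ℕ)+1) (r+(i:ℕ)+2) (by omega) (by omega)
  else gp r ((i:ℕ)+1) ((i:ℕ)+1) (by have := i.isLt; omega) (by have := i.isLt; omega)

lemma pmap_mem (i : Fin (2*r+1)) : pmap r i ∈ S2 r := by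
  rw [pmap]
  split_ifs with h
  · rw [mem_S2_iff, gp0, gp1]; omega
  · rw [mem_S2_iff, gp0, gp1]
    have := i.isLt; omega

lemma qmap_mem (i : Fin (2*r+1)) : qmap r i ∈ S1 r := by
  rw [qmap]
  split_ifs with h
  · rw [mem_S1_iff, gp0, gp1]; omega
  · rw [mem_S1_iff, gp0, gp1]
    have := i.isLt; omega

lemma pmap_inj : Function.Injective (pmap r) := by
  intro i j hij
  rw [pt_eq_iff] at hij
  obtain ⟨h0, h1⟩ := hij
  have hi := i.isLt
  have hj := j.isLt
  unfold pmap at h0 h1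
  apply Fin.ext
  split_ifs at h0 h1 with ha hb hb <;> simp only [gp0, gp1] at h0 h1 <;> omega

lemma qmap_inj : Function.Injective (qmap r) := by
  intro i j hij
  rw [pt_eq_iff] at hij
  obtain ⟨h0, h1⟩ := hij
  have hi := i.isLt
  have hj := j.isLt
  unfold qmap at h0 h1
  apply Fin.ext
  split_ifs at h0 h1 with ha hb hb <;> simp only [gp0, gp1] at h0 h1 <;> omega

/-! ### the count -/

theorem many_minimal (hr : 5 ≤ r) :
    ((2*r+1)^2 : ℕ) ≤
      ({T : Set (Pt r) | TeachingSet (TClass 2 (2*r+2) 2) (fD r) T ∧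
        ∀ T' ⊂ T, ¬ TeachingSet (TClass 2 (2*r+2) 2) (fD r) T'}).ncard := by
  classical
  set C := TClass 2 (2*r+2) 2
  set MinT : Set (Set (Pt r)) := {T | TeachingSet C (fD r) T ∧ ∀ T' ⊂ T, ¬ TeachingSet C (fD r) T'}
  have hex : ∀ ij : Fin (2*r+1) × Fin (2*r+1),
      ∃ T', T' ⊆ Tset r (pmap r ij.1) (qmap r ij.2) ∧ TeachingSet C (fD r) T' ∧
        ∀ T'' ⊂ T', ¬ TeachingSet C (fD r) T'' := by
    intro ij
    exact exists_minimal C (fD r) (Tset r (pmap r ij.1) (qmap r ij.2)).ncard _ le_rfl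
      (teach r hr _ _ (pmap_mem r ij.1) (qmap_mem r ij.2))
  choose Φ hsub hteachΦ hminΦ using hex
  have hpin : ∀ ij, pmap r ij.1 ∈ Φ ij := by
    intro ij
    by_contra hnp
    exact not_teach_dp r hr _ _ (pmap_mem r ij.1) (qmap_mem r ij.2) (Φ ij) (hsub ij) hnp (hteachΦ ij)
  have hqin' : ∀ ij, qmap r ij.2 ∈ Φ ij := by
    intro ij
    by_contra hnq
    exact not_teach_dq r hr _ _ (pmap_mem r ij.1) (qmap_mem r ij.2) (Φ ij) (hsub ij) hnq (hteachΦ ij)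
  have hS2cap : ∀ ij v, v ∈ Φ ij → v ∈ S2 r → v = pmap r ij.1 := by
    intro ij v hv hv2
    rcases hsub ij hv with h | h
    · exact absurd hv2 h.2
    · rcases h with h | h
      · exact h
      · exact absurd hv2 (fun h2 => (S1_S2_disj r v (h ▸ qmap_mem r ij.2) h2))
  have hS1cap : ∀ ij v, v ∈ Φ ij → v ∈ S1 r → v = qmap r ij.2 := by
    intro ij v hv hv1
    rcases hsub ij hv with h | h
    · exact absurd hv1 h.1
    · rcases h with h | h
      · exact absurd hv1 (fun h1 => (S1_S2_disj r v h1 (h ▸ pmap_mem r ij.1)))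
      · exact h
  have hΦinj : Function.Injective Φ := by
    intro ij ij' heq
    have hp : pmap r ij'.1 = pmap r ij.1 :=
      hS2cap ij _ (heq ▸ hpin ij') (pmap_mem r ij'.1)
    have hq : qmap r ij'.2 = qmap r ij.2 :=
      hS1cap ij _ (heq ▸ hqin' ij') (qmap_mem r ij'.2)
    have h1 : ij'.1 = ij.1 := pmap_inj r hp
    have h2 : ij'.2 = ij.2 := qmap_inj r hq
    exact (Prod.ext h1.symm h2.symm)
  have hrange : Set.range Φ ⊆ MinT := by
    rintro _ ⟨ij, rfl⟩
    exact ⟨hteachΦ ij, hminΦ ij⟩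
  have hfin : MinT.Finite := Set.toFinite MinT
  calc ((2*r+1)^2 : ℕ)
      = Nat.card (Fin (2*r+1) × Fin (2*r+1)) := by
        simp [Nat.card_eq_fintype_card]
        ring
    _ = Nat.card (Set.range Φ) := (Nat.card_range_of_injective hΦinj).symm
    _ = (Set.range Φ).ncard := (Nat.card_coe_set_eq _)
    _ ≤ MinT.ncard := Set.ncard_le_ncard hrange hfin

end S19


/-- There are 2-threshold functions on `E_n²` with `Ω(n²)` distinct minimal
teaching sets with respect to `T(2,n,2)`, for infinitely many `n`. -/
theorem stmt19 :
    ∃ c : ℝ, 0 < c ∧ ∀ N : ℕ, ∃ n, N ≤ n ∧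
      ∃ f : (Fin 2 → Fin n) → Bool, IsKThreshold 2 n 2 f ∧
        c * (n : ℝ) ^ 2 ≤
          (({T : Set (Fin 2 → Fin n) | TeachingSet (TClass 2 n 2) f T ∧
            ∀ T' ⊂ T, ¬ TeachingSet (TClass 2 n 2) f T'}).ncard : ℝ) := by
    classical
  refine ⟨1/4, by norm_num, ?_⟩
  intro N
  have hmax : N ≤ max N 5 := Nat.le_max_left N 5
  have hr : 5 ≤ max N 5 := Nat.le_max_right N 5
  set r := max N 5 with hrdef
  refine ⟨2 * r + 2, by omega, S19.fD r, S19.fD_isk r, ?_⟩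
  have hcount := S19.many_minimal r hr
  have hle : (((2*r+1)^2 : ℕ) : ℝ) ≤
      ((({T : Set (Fin 2 → Fin (2*r+2)) | TeachingSet (TClass 2 (2*r+2) 2) (S19.fD r) T ∧
        ∀ T' ⊂ T, ¬ TeachingSet (TClass 2 (2*r+2) 2) (S19.fD r) T'}).ncard : ℕ) : ℝ) := by
    exact_mod_cast hcount
  have harith : (1/4 : ℝ) * ((2*r+2 : ℕ) : ℝ)^2 ≤ (((2*r+1)^2 : ℕ) : ℝ) := by
    push_cast
    have : (0:ℝ) ≤ (r:ℝ) := by positivity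
    nlinarith
  linarith
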